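/- Let G be an (additively written) abelian group, s, l positive integers, and A ∈ M_{s×l}(ℤ) a matrix all of whose rows sum to 0. Suppose D = Q·A·P⁻¹ is in Smith normal form for some Q ∈ GL_s(ℤ), P ∈ GL_l(ℤ), and let r be the number of nonzero diagonal entries α_1 = D_{11}, …, α_r = D_{rr} of D. Then r ≤ l−1, and the subgroup K := { (g_1,…,g_l) ∈ G^l : g_1 = 0 and ∑_{j=1}^{l} A_{ij}·g_j = 0 for every 1 ≤ i ≤ s } of G^l is isomorphic, as an abelian group, to (∏_{i=1}^{r} G[α_i]) × G^{l−1−r}, where G[α] := { x ∈ G : α·x = 0 } denotes the α-torsion subgroup of G. -/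

import Mathlib

open Matrix

section auxdefs

variable {G : Type*} [AddCommGroup G]

private def cfun {n : ℕ} (c : Fin n → ℤ) : (Fin n → ℤ) →ₗ[ℤ] ℤ where
  toFun x := ∑ k, c k * x k
  map_add' x y := by simp [mul_add, Finset.sum_add_distrib]
  map_smul' a x := by
    simp only [Pi.smul_apply, smul_eq_mul, RingHom.id_apply, Finset.mul_sum]
    exact Finset.sum_congr rfl fun k _ => by ring

private lemma exists_unimodular (n : ℕ) (h0 : 0 < n) (c v : Fin n → ℤ)
    (hcv : ∑ k, c k * v k = 1) :
    ∃ W M : Matrix (Fin n) (Fin n) ℤ, W * M = 1 ∧ M * W = 1 ∧ ∀ k, W ⟨0, h0⟩ k = c k := by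
  obtain ⟨m', rfl⟩ : ∃ m', n = m' + 1 := ⟨n - 1, by omega⟩
  set f := cfun c with hf
  have hfv : f v = 1 := hcv
  have hsm : ∀ (a : ℤ) (x : Fin (m'+1) → ℤ), f (a • x) = a * f x := fun a x => by
    rw [_root_.map_smul, smul_eq_mul]
  let e1 : (Fin (m' + 1) → ℤ) ≃ₗ[ℤ] ℤ × (LinearMap.ker f) :=
  { toFun := fun x => (f x, ⟨x - f x • v, by
      rw [LinearMap.mem_ker, map_sub, hsm, hfv, mul_one, sub_self]⟩),
    invFun := fun p => p.1 • v + (p.2 : Fin (m'+1) → ℤ),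
    map_add' := fun x y => by
      refine Prod.ext (map_add f x y) (Subtype.ext ?_)
      show x + y - f (x + y) • v = (x - f x • v) + (y - f y • v)
      rw [map_add, add_smul]; abel
    map_smul' := fun a x => by
      refine Prod.ext ?_ (Subtype.ext ?_)
      · show f (a • x) = a • f x; rw [_root_.map_smul]
      · show a • x - f (a • x) • v = a • (x - f x • v)
        rw [_root_.map_smul, smul_eq_mul]; module
    left_inv := fun x => by simp
    right_inv := fun p => by
      have hp : f (p.2 : Fin (m'+1) → ℤ) = 0 := p.2.2
      have hfp : f (p.1 • v + (p.2 : Fin (m'+1) → ℤ)) = p.1 := by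
        rw [map_add, hsm, hfv, mul_one, hp, add_zero]
      refine Prod.ext hfp (Subtype.ext ?_)
      show p.1 • v + (p.2 : Fin (m'+1) → ℤ) - f (p.1 • v + (p.2 : Fin (m'+1) → ℤ)) • v
        = (p.2 : Fin (m'+1) → ℤ)
      rw [hfp]; abel }
  obtain ⟨m, b⟩ := Submodule.basisOfPid (Pi.basisFun ℤ (Fin (m'+1))) (LinearMap.ker f)
  haveI : Module.Finite ℤ (LinearMap.ker f) := Module.Finite.of_basis b
  haveI : Module.Free ℤ (LinearMap.ker f) := Module.Free.of_basis b
  have hm : m = m' := by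
    have h1 : Module.finrank ℤ (Fin (m'+1) → ℤ) = m' + 1 := by
      simp [Module.finrank_fintype_fun_eq_card]
    have h2 : Module.finrank ℤ (Fin (m'+1) → ℤ) = 1 + m := by
      rw [e1.finrank_eq, Module.finrank_prod, Module.finrank_self,
        Module.finrank_eq_card_basis b, Fintype.card_fin]
    omega
  subst hm
  let e3 : (ℤ × (Fin m → ℤ)) ≃ₗ[ℤ] (Fin (m + 1) → ℤ) :=
  { toFun := fun p => Fin.cons p.1 p.2,
    invFun := fun y => (y 0, fun k => y k.succ),
    map_add' := fun p q => by
      funext i; refine Fin.cases ?_ ?_ i <;> simp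
    map_smul' := fun a p => by
      funext i; refine Fin.cases ?_ ?_ i <;> simp
    left_inv := fun p => by simp
    right_inv := fun y => by
      funext i; refine Fin.cases ?_ ?_ i <;> simp }
  let E : (Fin (m+1) → ℤ) ≃ₗ[ℤ] (Fin (m+1) → ℤ) :=
    (e1.trans ((LinearEquiv.refl ℤ ℤ).prodCongr b.equivFun)).trans e3
  refine ⟨LinearMap.toMatrix' (E : (Fin (m+1) → ℤ) →ₗ[ℤ] (Fin (m+1) → ℤ)),
    LinearMap.toMatrix' (E.symm : (Fin (m+1) → ℤ) →ₗ[ℤ] (Fin (m+1) → ℤ)), ?_, ?_, ?_⟩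
  · rw [← LinearMap.toMatrix'_comp]
    convert LinearMap.toMatrix'_id
    ext x : 1
    simp
  · rw [← LinearMap.toMatrix'_comp]
    convert LinearMap.toMatrix'_id
    ext x : 1
    simp
  · intro k
    rw [LinearMap.toMatrix'_apply]
    have hE : ∀ x : Fin (m+1) → ℤ, (E x) ⟨0, h0⟩ = f x := by
      intro x
      show (e3 _) ⟨0, h0⟩ = f x
      have h00 : (⟨0, h0⟩ : Fin (m+1)) = 0 := rfl
      rw [h00]
      rfl
    rw [LinearEquiv.coe_coe, hE]
    show (∑ j, c j * (Pi.single k (1:ℤ) : Fin (m+1) → ℤ) j) = c k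
    simp [Pi.single_apply, mul_ite]

private def mvG {n m : ℕ} (M : Matrix (Fin n) (Fin m) ℤ) (g : Fin m → G) : Fin n → G :=
  fun i => ∑ j, M i j • g j

private lemma mvG_mvG {n m p : ℕ} (M : Matrix (Fin n) (Fin m) ℤ) (N : Matrix (Fin m) (Fin p) ℤ)
    (g : Fin p → G) : mvG M (mvG N g) = mvG (M * N) g := by
  funext i
  simp only [mvG, Matrix.mul_apply, Finset.smul_sum, Finset.sum_smul, smul_smul]
  rw [Finset.sum_comm]

private lemma mvG_one {n : ℕ} (g : Fin n → G) : mvG (1 : Matrix (Fin n) (Fin n) ℤ) g = g := by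
  funext i
  simp [mvG, Matrix.one_apply, ite_smul]

private lemma mvG_add {n m : ℕ} (M : Matrix (Fin n) (Fin m) ℤ) (g h : Fin m → G) :
    mvG M (g + h) = mvG M g + mvG M h := by
  funext i
  simp [mvG, smul_add, Finset.sum_add_distrib]

private lemma mvG_zero {n m : ℕ} (M : Matrix (Fin n) (Fin m) ℤ) :
    mvG M (0 : Fin m → G) = 0 := by
  funext i; simp [mvG]

private lemma sum_split {r l : ℕ} (hrl : r ≤ l) (f : Fin l → G) :
    ∑ j, f j = (∑ i : Fin r, f ⟨i, lt_of_lt_of_le i.isLt hrl⟩) +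
      ∑ k : Fin (l - r), f ⟨r + k, by omega⟩ := by
  have hl' : r + (l - r) = l := by omega
  rw [show (∑ j, f j) = ∑ j : Fin (r + (l - r)), f (Fin.cast hl' j) from
    (Fintype.sum_equiv (finCongr hl') _ _ fun j => rfl).symm]
  rw [Fin.sum_univ_add]
  rfl

end auxdefs

/-- A matrix `A ∈ M_{s×l}(ℤ)` is in Smith normal form: it is diagonal, and there is `r`
such that the first `r` diagonal entries are positive, the remaining ones vanish, and
consecutive diagonal entries divide each other. -/
def IsSNF {s l : ℕ} (A : Matrix (Fin s) (Fin l) ℤ) : Prop :=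
  (∀ (i : Fin s) (j : Fin l), (i : ℕ) ≠ (j : ℕ) → A i j = 0) ∧
  ∃ r : ℕ,
    (∀ (i : Fin s) (j : Fin l), (i : ℕ) = (j : ℕ) →
      ((i : ℕ) < r → 0 < A i j) ∧ (r ≤ (i : ℕ) → A i j = 0)) ∧
    (∀ (i i' : Fin s) (j j' : Fin l), (i : ℕ) = (j : ℕ) → (i' : ℕ) = (j' : ℕ) →
      (i : ℕ) + 1 = (i' : ℕ) → A i j ∣ A i' j')

/-- The matrix obtained from `A` by erasing its first column. -/
def eraseFirstCol {s l : ℕ} (A : Matrix (Fin s) (Fin l) ℤ) :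
    Matrix (Fin s) (Fin (l - 1)) ℤ :=
  Matrix.of fun i j => A i ⟨(j : ℕ) + 1, by have := j.isLt; omega⟩

/-- A matrix `A` with `A·𝟙 = 0` is in homogeneous Smith normal form if the matrix obtained
from `A` by erasing its first column is in Smith normal form. -/
def IsHSNF {s l : ℕ} (A : Matrix (Fin s) (Fin l) ℤ) : Prop :=
  A *ᵥ 1 = 0 ∧ IsSNF (eraseFirstCol A)

/-- The `α`-torsion subgroup `G[α] = {x ∈ G : α·x = 0}` of an abelian group `G`. -/
def torsionBy (G : Type*) [AddCommGroup G] (α : ℤ) : AddSubgroup G where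
  carrier := {x | α • x = 0}
  zero_mem' := by simp
  add_mem' := by
    intro a b ha hb
    simp only [Set.mem_setOf_eq, smul_add] at *
    rw [ha, hb, add_zero]
  neg_mem' := by
    intro a ha
    simp only [Set.mem_setOf_eq, smul_neg] at *
    rw [ha, neg_zero]

/-- The subgroup `K = {(g_1,…,g_l) ∈ G^l : g_1 = 0 and ∑_j A_{ij}·g_j = 0 for all i}`. -/
def kerSubgroup (G : Type*) [AddCommGroup G] {s l : ℕ} (hl : 0 < l)
    (A : Matrix (Fin s) (Fin l) ℤ) : AddSubgroup (Fin l → G) where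
  carrier := {g | g ⟨0, hl⟩ = 0 ∧ ∀ i : Fin s, ∑ j : Fin l, A i j • g j = 0}
  zero_mem' := by
    refine ⟨rfl, fun i => ?_⟩
    simp
  add_mem' := by
    rintro a b ⟨ha0, ha⟩ ⟨hb0, hb⟩
    refine ⟨by simp [Pi.add_apply, ha0, hb0], fun i => ?_⟩
    have : ∀ j : Fin l, A i j • (a j + b j) = A i j • a j + A i j • b j := fun j => smul_add _ _ _
    simp only [Pi.add_apply, this, Finset.sum_add_distrib, ha i, hb i, add_zero]
  neg_mem' := by
    rintro a ⟨ha0, ha⟩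
    refine ⟨by simp [Pi.neg_apply, ha0], fun i => ?_⟩
    have : ∀ j : Fin l, A i j • (-(a j)) = -(A i j • a j) := fun j => smul_neg _ _
    simp only [Pi.neg_apply, this, Finset.sum_neg_distrib, ha i, neg_zero]


section mainaux

variable {G : Type*} [AddCommGroup G]

private def khatF {r l : ℕ} (hrl : r ≤ l) (c : Fin l → ℤ) {α : Fin r → ℤ}
    (t : ∀ i, torsionBy G (α i)) (x : Fin (l - 1 - r) → G) : Fin (l - r) → G :=
  fun k =>
    if _hk : (k : ℕ) = 0 then -∑ i : Fin r, c ⟨i, lt_of_lt_of_le i.isLt hrl⟩ • (t i : G)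
    else x ⟨(k : ℕ) - 1, by have := k.isLt; omega⟩

private def hbuildF {r l : ℕ} (hrl : r ≤ l) {α : Fin r → ℤ}
    (t : ∀ i, torsionBy G (α i)) (h' : Fin (l - r) → G) : Fin l → G :=
  fun j =>
    if hj : (j : ℕ) < r then (t ⟨j, hj⟩ : G)
    else h' ⟨(j : ℕ) - r, by have := j.isLt; omega⟩

end mainaux

/-- If `D = Q·A·P⁻¹` is the Smith normal form of a homogeneous matrix `A`, with `r` nonzero
diagonal entries (the invariant factors `α_i = D_{ii}`), then `r ≤ l-1` and the subgroup
`K = {(g_1,…,g_l) ∈ G^l : g_1 = 0, ∑_j A_{ij} g_j = 0 ∀i}` of `G^l` is isomorphic to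
`(∏_{i=1}^r G[α_i]) × G^{l-1-r}`. -/
theorem kernel_iso (G : Type*) [AddCommGroup G] (s l : ℕ) (hs : 0 < s) (hl : 0 < l)
    (A : Matrix (Fin s) (Fin l) ℤ) (hA : A *ᵥ 1 = 0)
    (Q : Matrix.GeneralLinearGroup (Fin s) ℤ) (P : Matrix.GeneralLinearGroup (Fin l) ℤ)
    (D : Matrix (Fin s) (Fin l) ℤ)
    (hD : D = (Q : Matrix (Fin s) (Fin s) ℤ) * A *
      ((P⁻¹ : Matrix.GeneralLinearGroup (Fin l) ℤ) : Matrix (Fin l) (Fin l) ℤ))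
    (hDsnf : IsSNF D)
    (r : ℕ) (hrs : r ≤ s) (hrl : r ≤ l)
    (hr : ∀ (i : ℕ) (his : i < s) (hil : i < l), D ⟨i, his⟩ ⟨i, hil⟩ ≠ 0 ↔ i < r) :
    r ≤ l - 1 ∧
      Nonempty ((kerSubgroup G hl A) ≃+
        ((∀ i : Fin r, torsionBy G (D ⟨i, i.isLt.trans_le hrs⟩ ⟨i, i.isLt.trans_le hrl⟩)) ×
          (Fin (l - 1 - r) → G))) := by
  classical
  set Pm : Matrix (Fin l) (Fin l) ℤ := (P : Matrix (Fin l) (Fin l) ℤ) with hPmdef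
  set Pi' : Matrix (Fin l) (Fin l) ℤ :=
    ((P⁻¹ : Matrix.GeneralLinearGroup (Fin l) ℤ) : Matrix (Fin l) (Fin l) ℤ) with hPidef
  set Qm : Matrix (Fin s) (Fin s) ℤ := (Q : Matrix (Fin s) (Fin s) ℤ) with hQmdef
  set Qi : Matrix (Fin s) (Fin s) ℤ :=
    ((Q⁻¹ : Matrix.GeneralLinearGroup (Fin s) ℤ) : Matrix (Fin s) (Fin s) ℤ) with hQidef
  have hPPi : Pm * Pi' = 1 := Units.mul_inv P
  have hPiP : Pi' * Pm = 1 := Units.inv_mul P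
  have hQiQ : Qi * Qm = 1 := Units.inv_mul Q
  have hDPm : D * Pm = Qm * A := by
    rw [hD, Matrix.mul_assoc, hPiP, Matrix.mul_one]
  have hAPi : A * Pi' = Qi * D := by
    rw [hD, ← Matrix.mul_assoc, ← Matrix.mul_assoc, hQiQ, Matrix.one_mul]
  set i0 : Fin l := ⟨0, hl⟩ with hi0
  set c : Fin l → ℤ := fun j => Pi' i0 j with hcdef
  set v : Fin l → ℤ := fun i => ∑ j, Pm i j with hvdef
  have hDv0 : D *ᵥ v = 0 := by
    have hv1 : v = Pm *ᵥ (1 : Fin l → ℤ) := by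
      funext i
      show (∑ j, Pm i j) = _
      simp [Matrix.mulVec, dotProduct]
    rw [hv1, Matrix.mulVec_mulVec, hDPm, ← Matrix.mulVec_mulVec, hA, Matrix.mulVec_zero]
  have hvr : ∀ j : Fin l, (j : ℕ) < r → v j = 0 := by
    intro j hj
    have his : (j : ℕ) < s := lt_of_lt_of_le hj hrs
    have h1 : ∑ k, D ⟨j, his⟩ k * v k = 0 := by
      have h := congrFun hDv0 ⟨j, his⟩
      simpa [Matrix.mulVec, dotProduct] using h
    have h2 : ∑ k, D ⟨j, his⟩ k * v k = D ⟨j, his⟩ j * v j := by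
      refine Finset.sum_eq_single j (fun k _ hk => ?_)
        (fun hmem => absurd (Finset.mem_univ j) hmem)
      rw [hDsnf.1 ⟨j, his⟩ k (fun h => hk (Fin.ext h.symm)), zero_mul]
    have h3 : D ⟨j, his⟩ j ≠ 0 := (hr j his j.isLt).mpr hj
    rw [h2] at h1
    exact (mul_eq_zero.mp h1).resolve_left h3
  have hsum1 : ∑ j, c j * v j = 1 := by
    have h1 : (∑ j, c j * v j) = ∑ j, ∑ k, Pi' i0 j * Pm j k := by
      refine Finset.sum_congr rfl fun j _ => ?_
      show Pi' i0 j * (∑ k, Pm j k) = _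
      exact Finset.mul_sum _ _ _
    rw [h1, Finset.sum_comm]
    have h2 : ∀ k, (∑ j, Pi' i0 j * Pm j k) = (1 : Matrix (Fin l) (Fin l) ℤ) i0 k := fun k => by
      rw [← Matrix.mul_apply, hPiP]
    rw [Finset.sum_congr rfl fun k _ => h2 k]
    exact (Finset.sum_congr rfl fun k _ => Matrix.one_apply (i := i0) (j := k)).trans (by simp)
  have hr1 : r ≤ l - 1 := by
    by_contra hcon
    have hone : (1 : ℤ) = 0 := by
      rw [← hsum1]
      exact Finset.sum_eq_zero fun j _ => by
        rw [hvr j (by have := j.isLt; omega), mul_zero]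
    exact one_ne_zero hone
  have hn : 0 < l - r := by omega
  set c' : Fin (l - r) → ℤ := fun k => c ⟨r + k, by have := k.isLt; omega⟩ with hc'def
  set v' : Fin (l - r) → ℤ := fun k => v ⟨r + k, by have := k.isLt; omega⟩ with hv'def
  have hcv' : ∑ k, c' k * v' k = 1 := by
    have hs2 := sum_split (G := ℤ) hrl (fun j => c j * v j)
    rw [hsum1] at hs2
    have h0 : (∑ i : Fin r, c ⟨(i : ℕ), lt_of_lt_of_le i.isLt hrl⟩ *
        v ⟨(i : ℕ), lt_of_lt_of_le i.isLt hrl⟩) = 0 :=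
      Finset.sum_eq_zero fun i _ => by rw [hvr _ i.isLt, mul_zero]
    rw [h0, zero_add] at hs2
    exact hs2.symm
  obtain ⟨W, M, hWM, hMW, hW0⟩ := exists_unimodular (l - r) hn c' v' hcv'
  have hsum_diag : ∀ (h : Fin l → G) (i : Fin s) (hil : (i : ℕ) < l),
      (∑ j, D i j • h j) = D i ⟨i, hil⟩ • h ⟨i, hil⟩ := by
    intro h i hil
    refine Finset.sum_eq_single ((⟨(i : ℕ), hil⟩ : Fin l)) (fun j _ hj => ?_)
      (fun hmem => absurd (Finset.mem_univ _) hmem)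
    rw [hDsnf.1 i j (fun hij => hj (Fin.ext hij.symm)), zero_smul]
  have hDzero_hi : ∀ (i : Fin s), r ≤ (i : ℕ) → ∀ (hil : (i : ℕ) < l), D i ⟨i, hil⟩ = 0 := by
    intro i hi hil
    by_contra hne
    have : (i : ℕ) < r := (hr i i.isLt hil).mp hne
    omega
  have hDrow : ∀ (h : Fin l → G) (i : Fin s), r ≤ (i : ℕ) → (∑ j, D i j • h j) = 0 := by
    intro h i hi
    by_cases hil : (i : ℕ) < l
    · rw [hsum_diag h i hil, hDzero_hi i hi hil, zero_smul]
    · exact Finset.sum_eq_zero fun j _ => by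
        rw [hDsnf.1 i j (by have := j.isLt; omega), zero_smul]
  have hmvA : ∀ g : Fin l → G, (∀ i, ∑ j, A i j • g j = 0) → mvG D (mvG Pm g) = 0 := by
    intro g hg
    rw [mvG_mvG, hDPm, ← mvG_mvG]
    have hAg : mvG A g = 0 := funext fun i => hg i
    rw [hAg, mvG_zero]
  have htor : ∀ (g : Fin l → G), (∀ i, ∑ j, A i j • g j = 0) → ∀ i : Fin r,
      D ⟨i, i.isLt.trans_le hrs⟩ ⟨i, i.isLt.trans_le hrl⟩ •
        (mvG Pm g) ⟨i, i.isLt.trans_le hrl⟩ = 0 := by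
    intro g hg i
    have h1 : (∑ j, D ⟨(i : ℕ), i.isLt.trans_le hrs⟩ j • (mvG Pm g) j) = 0 :=
      congrFun (hmvA g hg) ⟨(i : ℕ), i.isLt.trans_le hrs⟩
    rw [hsum_diag (mvG Pm g) ⟨(i : ℕ), i.isLt.trans_le hrs⟩ (i.isLt.trans_le hrl)] at h1
    exact h1
  have hfirst : ∀ g : Fin l → G, (∑ j, c j • (mvG Pm g) j) = g i0 := by
    intro g
    have h1 : mvG Pi' (mvG Pm g) = g := by rw [mvG_mvG, hPiP, mvG_one]
    exact congrFun h1 i0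
  have hgmem : ∀ gK : (kerSubgroup G hl A),
      (gK : Fin l → G) ⟨0, hl⟩ = 0 ∧ ∀ i, ∑ j, A i j • (gK : Fin l → G) j = 0 :=
    fun gK => gK.2
  have hkey : ∀ g : Fin l → G, g i0 = 0 →
      mvG W (fun k : Fin (l - r) => mvG Pm g ⟨r + (k : ℕ), by have := k.isLt; omega⟩) ⟨0, hn⟩
        = -∑ i : Fin r, c ⟨(i : ℕ), lt_of_lt_of_le i.isLt hrl⟩ •
            mvG Pm g ⟨(i : ℕ), lt_of_lt_of_le i.isLt hrl⟩ := by
    intro g hg1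
    have hz : (∑ j, c j • mvG Pm g j) = 0 := by rw [hfirst g]; exact hg1
    rw [sum_split hrl] at hz
    have hW : mvG W (fun k : Fin (l - r) =>
          mvG Pm g ⟨r + (k : ℕ), by have := k.isLt; omega⟩) ⟨0, hn⟩
        = ∑ k : Fin (l - r), c ⟨r + (k : ℕ), by have := k.isLt; omega⟩ •
            mvG Pm g ⟨r + (k : ℕ), by have := k.isLt; omega⟩ := by
      show (∑ k : Fin (l - r), W ⟨0, hn⟩ k •
        mvG Pm g ⟨r + (k : ℕ), by have := k.isLt; omega⟩) = _
      refine Finset.sum_congr rfl fun k _ => ?_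
      rw [hW0 k]
    rw [hW]
    exact eq_neg_of_add_eq_zero_right hz
  -- pointwise evaluation lemmas for the builders
  have hbuild_lt : ∀ (t : ∀ i : Fin r, torsionBy G
        (D ⟨i, i.isLt.trans_le hrs⟩ ⟨i, i.isLt.trans_le hrl⟩)) (h' : Fin (l - r) → G)
      (i : Fin r),
      hbuildF hrl t h' ⟨(i : ℕ), lt_of_lt_of_le i.isLt hrl⟩ = (t i : G) := by
    intro t h' i
    simp only [hbuildF]
    rw [dif_pos i.isLt]
  have hbuild_js : ∀ (t : ∀ i : Fin r, torsionBy G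
        (D ⟨i, i.isLt.trans_le hrs⟩ ⟨i, i.isLt.trans_le hrl⟩)) (h' : Fin (l - r) → G)
      (k : Fin (l - r)),
      hbuildF hrl t h' ⟨r + (k : ℕ), by have := k.isLt; omega⟩ = h' k := by
    intro t h' k
    simp only [hbuildF]
    rw [dif_neg (by omega)]
    congr 1
    exact Fin.ext (show r + (k : ℕ) - r = (k : ℕ) by omega)
  have hkhat_zero : ∀ (t : ∀ i : Fin r, torsionBy G
        (D ⟨i, i.isLt.trans_le hrs⟩ ⟨i, i.isLt.trans_le hrl⟩)) (x : Fin (l - 1 - r) → G),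
      khatF hrl c t x ⟨0, hn⟩
        = -∑ i : Fin r, c ⟨(i : ℕ), lt_of_lt_of_le i.isLt hrl⟩ • (t i : G) := by
    intro t x
    simp [khatF]
  have hkhat_succ : ∀ (t : ∀ i : Fin r, torsionBy G
        (D ⟨i, i.isLt.trans_le hrs⟩ ⟨i, i.isLt.trans_le hrl⟩)) (x : Fin (l - 1 - r) → G)
      (m : Fin (l - 1 - r)),
      khatF hrl c t x ⟨(m : ℕ) + 1, by have := m.isLt; omega⟩ = x m := by
    intro t x m
    simp [khatF]
  have hkhat_eq : ∀ (t : ∀ i : Fin r, torsionBy G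
        (D ⟨i, i.isLt.trans_le hrs⟩ ⟨i, i.isLt.trans_le hrl⟩)) (g : Fin l → G),
      g i0 = 0 →
      (∀ i : Fin r, (t i : G) = mvG Pm g ⟨(i : ℕ), lt_of_lt_of_le i.isLt hrl⟩) →
      khatF hrl c t (fun m : Fin (l - 1 - r) => mvG W (fun k : Fin (l - r) =>
          mvG Pm g ⟨r + (k : ℕ), by have := k.isLt; omega⟩)
          ⟨(m : ℕ) + 1, by have := m.isLt; omega⟩)
        = mvG W (fun k : Fin (l - r) => mvG Pm g ⟨r + (k : ℕ), by have := k.isLt; omega⟩) := by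
    intro t g hg1 ht
    funext k
    by_cases hk : (k : ℕ) = 0
    · rw [show k = ⟨0, hn⟩ from Fin.ext hk, hkhat_zero t _, hkey g hg1]
      congr 1
      exact Finset.sum_congr rfl fun i _ => by rw [ht i]
    · rw [show k = ⟨((k : ℕ) - 1) + 1, by have := k.isLt; omega⟩ from Fin.ext (show (k : ℕ) = (k : ℕ) - 1 + 1 by omega)]
      rw [hkhat_succ t _ ⟨(k : ℕ) - 1, by have := k.isLt; omega⟩]
  have hbuild_eq : ∀ (t : ∀ i : Fin r, torsionBy G
        (D ⟨i, i.isLt.trans_le hrs⟩ ⟨i, i.isLt.trans_le hrl⟩)) (g : Fin l → G),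
      (∀ i : Fin r, (t i : G) = mvG Pm g ⟨(i : ℕ), lt_of_lt_of_le i.isLt hrl⟩) →
      hbuildF hrl t (fun k : Fin (l - r) =>
          mvG Pm g ⟨r + (k : ℕ), by have := k.isLt; omega⟩) = mvG Pm g := by
    intro t g ht
    funext j
    simp only [hbuildF]
    by_cases hj : (j : ℕ) < r
    · rw [dif_pos hj, ht ⟨(j : ℕ), hj⟩]
    · rw [dif_neg hj]
      congr 1
      exact Fin.ext (show r + ((j : ℕ) - r) = (j : ℕ) by omega)
  have hmem : ∀ (t : ∀ i : Fin r, torsionBy G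
        (D ⟨i, i.isLt.trans_le hrs⟩ ⟨i, i.isLt.trans_le hrl⟩))
      (x : Fin (l - 1 - r) → G),
      mvG Pi' (hbuildF hrl t (mvG M (khatF hrl c t x))) ∈ kerSubgroup G hl A := by
    intro t x
    constructor
    · show (∑ j, Pi' i0 j • hbuildF hrl t (mvG M (khatF hrl c t x)) j) = 0
      rw [sum_split hrl (fun j => Pi' i0 j • hbuildF hrl t (mvG M (khatF hrl c t x)) j)]
      have hB : (∑ k : Fin (l - r), Pi' i0 ⟨r + (k : ℕ), by have := k.isLt; omega⟩ •
            hbuildF hrl t (mvG M (khatF hrl c t x)) ⟨r + (k : ℕ), by have := k.isLt; omega⟩)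
          = -∑ i : Fin r, c ⟨(i : ℕ), lt_of_lt_of_le i.isLt hrl⟩ • (t i : G) := by
        have h1 : (∑ k : Fin (l - r), Pi' i0 ⟨r + (k : ℕ), by have := k.isLt; omega⟩ •
              hbuildF hrl t (mvG M (khatF hrl c t x)) ⟨r + (k : ℕ), by have := k.isLt; omega⟩)
            = ∑ k : Fin (l - r), W ⟨0, hn⟩ k • mvG M (khatF hrl c t x) k := by
          refine Finset.sum_congr rfl fun k _ => ?_
          rw [hbuild_js t _ k, hW0 k]
        rw [h1]
        have h3 : mvG W (mvG M (khatF hrl c t x)) = khatF hrl c t x := by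
          rw [mvG_mvG, hWM, mvG_one]
        have h2 : (∑ k : Fin (l - r), W ⟨0, hn⟩ k • mvG M (khatF hrl c t x) k)
            = khatF hrl c t x ⟨0, hn⟩ := congrFun h3 ⟨0, hn⟩
        rw [h2, hkhat_zero t x]
      have hAq : (∑ i : Fin r, Pi' i0 ⟨(i : ℕ), lt_of_lt_of_le i.isLt hrl⟩ •
            hbuildF hrl t (mvG M (khatF hrl c t x)) ⟨(i : ℕ), lt_of_lt_of_le i.isLt hrl⟩)
          = ∑ i : Fin r, c ⟨(i : ℕ), lt_of_lt_of_le i.isLt hrl⟩ • (t i : G) := by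
        refine Finset.sum_congr rfl fun i _ => ?_
        rw [hbuild_lt t _ i]
      rw [hAq, hB, add_neg_cancel]
    · intro i
      have h2 : mvG D (hbuildF hrl t (mvG M (khatF hrl c t x))) = 0 := by
        funext i'
        show (∑ j, D i' j • hbuildF hrl t (mvG M (khatF hrl c t x)) j) = 0
        by_cases hir : (i' : ℕ) < r
        · have hil : (i' : ℕ) < l := lt_of_lt_of_le hir hrl
          rw [hsum_diag _ i' hil]
          have hbv : hbuildF hrl t (mvG M (khatF hrl c t x)) ⟨(i' : ℕ), hil⟩
              = (t ⟨(i' : ℕ), hir⟩ : G) := hbuild_lt t _ ⟨(i' : ℕ), hir⟩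
          rw [hbv]
          exact (t ⟨(i' : ℕ), hir⟩).2
        · exact hDrow _ i' (by omega)
      have h1 : mvG A (mvG Pi' (hbuildF hrl t (mvG M (khatF hrl c t x))))
          = mvG Qi (mvG D (hbuildF hrl t (mvG M (khatF hrl c t x)))) := by
        rw [mvG_mvG, hAPi, ← mvG_mvG]
      have h3 : mvG A (mvG Pi' (hbuildF hrl t (mvG M (khatF hrl c t x)))) = 0 := by
        rw [h1, h2, mvG_zero]
      exact congrFun h3 i
  refine ⟨hr1, ⟨{
    toFun := fun gK =>
      (fun i => ⟨mvG Pm (gK : Fin l → G) ⟨(i : ℕ), i.isLt.trans_le hrl⟩,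
        htor (gK : Fin l → G) (hgmem gK).2 i⟩,
       fun m => mvG W (fun k : Fin (l - r) =>
         mvG Pm (gK : Fin l → G) ⟨r + (k : ℕ), by have := k.isLt; omega⟩)
         ⟨(m : ℕ) + 1, by have := m.isLt; omega⟩),
    invFun := fun p => ⟨mvG Pi' (hbuildF hrl p.1 (mvG M (khatF hrl c p.1 p.2))),
      hmem p.1 p.2⟩,
    left_inv := ?_,
    right_inv := ?_,
    map_add' := ?_ }⟩⟩
  · intro gK
    apply Subtype.ext
    show mvG Pi' (hbuildF hrl _ (mvG M (khatF hrl c _ _))) = (gK : Fin l → G)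
    rw [hkhat_eq _ _ (hgmem gK).1 (fun i => rfl), mvG_mvG M W, hMW, mvG_one,
      hbuild_eq _ _ (fun i => rfl), mvG_mvG, hPiP, mvG_one]
  · rintro ⟨t, x⟩
    have hhb : mvG Pm (mvG Pi' (hbuildF hrl t (mvG M (khatF hrl c t x))))
        = hbuildF hrl t (mvG M (khatF hrl c t x)) := by
      rw [mvG_mvG, hPPi, mvG_one]
    refine Prod.ext ?_ ?_
    · funext i
      apply Subtype.ext
      show mvG Pm (mvG Pi' (hbuildF hrl t (mvG M (khatF hrl c t x))))
        ⟨(i : ℕ), i.isLt.trans_le hrl⟩ = (t i : G)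
      rw [hhb]
      exact hbuild_lt t _ i
    · funext m
      show mvG W (fun k : Fin (l - r) =>
          mvG Pm (mvG Pi' (hbuildF hrl t (mvG M (khatF hrl c t x))))
            ⟨r + (k : ℕ), by have := k.isLt; omega⟩)
          ⟨(m : ℕ) + 1, by have := m.isLt; omega⟩ = x m
      have hres2 : (fun k : Fin (l - r) =>
          mvG Pm (mvG Pi' (hbuildF hrl t (mvG M (khatF hrl c t x))))
            ⟨r + (k : ℕ), by have := k.isLt; omega⟩)
          = mvG M (khatF hrl c t x) := by
        funext k
        rw [hhb]
        exact hbuild_js t _ k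
      rw [hres2]
      have h4 : mvG W (mvG M (khatF hrl c t x)) = khatF hrl c t x := by
        rw [mvG_mvG, hWM, mvG_one]
      rw [h4]
      exact hkhat_succ t x m
  · intro a b
    refine Prod.ext ?_ ?_
    · funext i
      apply Subtype.ext
      show mvG Pm ((a : Fin l → G) + (b : Fin l → G)) ⟨(i : ℕ), i.isLt.trans_le hrl⟩
        = mvG Pm (a : Fin l → G) ⟨(i : ℕ), i.isLt.trans_le hrl⟩
          + mvG Pm (b : Fin l → G) ⟨(i : ℕ), i.isLt.trans_le hrl⟩
      rw [mvG_add]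
      rfl
    · funext m
      show mvG W (fun k : Fin (l - r) =>
          mvG Pm ((a : Fin l → G) + (b : Fin l → G)) ⟨r + (k : ℕ), by have := k.isLt; omega⟩)
          ⟨(m : ℕ) + 1, by have := m.isLt; omega⟩
        = mvG W (fun k : Fin (l - r) =>
            mvG Pm (a : Fin l → G) ⟨r + (k : ℕ), by have := k.isLt; omega⟩)
            ⟨(m : ℕ) + 1, by have := m.isLt; omega⟩
          + mvG W (fun k : Fin (l - r) =>
            mvG Pm (b : Fin l → G) ⟨r + (k : ℕ), by have := k.isLt; omega⟩)
            ⟨(m : ℕ) + 1, by have := m.isLt; omega⟩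
      have hsplit : (fun k : Fin (l - r) =>
          mvG Pm ((a : Fin l → G) + (b : Fin l → G)) ⟨r + (k : ℕ), by have := k.isLt; omega⟩)
          = (fun k : Fin (l - r) =>
              mvG Pm (a : Fin l → G) ⟨r + (k : ℕ), by have := k.isLt; omega⟩)
            + (fun k : Fin (l - r) =>
              mvG Pm (b : Fin l → G) ⟨r + (k : ℕ), by have := k.isLt; omega⟩) := by
        funext k
        rw [mvG_add]
        rfl
      rw [hsplit, mvG_add]
      rfl
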